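/- For C ≥ 2 and 0 < ρ₁ < C−1, the function Φ(z) = (1/z)·(ρ₁+Cz)^C/C! − Σ_{m=0}^{C−1} (ρ₁+Cz)^m/m! (critical case ρ₂ = C) has exactly one root z > 0. -/

import Mathlib

open Real Set


noncomputable def Haux (ρ₁ : ℝ) (C : ℕ) (x : ℝ) : ℝ :=
  ∑ m ∈ Finset.range C, (((m : ℝ) - ρ₁) / (Nat.factorial m : ℝ)) * x ^ m

lemma Haux_id (ρ₁ x : ℝ) (C : ℕ) :
    (x - ρ₁) * (∑ m ∈ Finset.range C, x ^ m / (Nat.factorial m : ℝ))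
      - (C : ℝ) * x ^ C / (Nat.factorial C : ℝ) = Haux ρ₁ C x := by
  have tel : ∑ m ∈ Finset.range C, (x - (m : ℝ)) * x ^ m / (Nat.factorial m : ℝ)
      = (C : ℝ) * x ^ C / (Nat.factorial C : ℝ) := by
    have h := Finset.sum_range_sub (f := fun k => (k : ℝ) * x ^ k / (Nat.factorial k : ℝ)) C
    have h2 : ∀ m : ℕ, ((m : ℝ) + 1) * x ^ (m + 1) / (Nat.factorial (m + 1) : ℝ)
        - (m : ℝ) * x ^ m / (Nat.factorial m : ℝ)
        = (x - (m : ℝ)) * x ^ m / (Nat.factorial m : ℝ) := by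
      intro m
      have hf : (0 : ℝ) < (Nat.factorial m : ℝ) := by exact_mod_cast m.factorial_pos
      rw [Nat.factorial_succ]
      push_cast
      field_simp
      ring
    calc ∑ m ∈ Finset.range C, (x - (m : ℝ)) * x ^ m / (Nat.factorial m : ℝ)
        = ∑ m ∈ Finset.range C, (((m : ℝ) + 1) * x ^ (m + 1) / (Nat.factorial (m + 1) : ℝ)
            - (m : ℝ) * x ^ m / (Nat.factorial m : ℝ)) :=
          Finset.sum_congr rfl (fun m _ => (h2 m).symm)
      _ = (C : ℝ) * x ^ C / (Nat.factorial C : ℝ) := by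
          have := h
          push_cast at this ⊢
          rw [this]
          simp
  rw [← tel, Finset.mul_sum, ← Finset.sum_sub_distrib]
  unfold Haux
  refine Finset.sum_congr rfl fun m _ => ?_
  ring



lemma Haux_lt (ρ₁ : ℝ) (C t : ℕ) (htρ : (t : ℝ) ≤ ρ₁) (hρt : ρ₁ < (t : ℝ) + 1)
    (htC : t + 1 < C) {x y : ℝ} (hx : 0 < x) (hxy : x < y) :
    Haux ρ₁ C x * y ^ t < Haux ρ₁ C y * x ^ t := by
  have hy : 0 < y := hx.trans hxy
  unfold Haux
  rw [Finset.sum_mul, Finset.sum_mul]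
  apply Finset.sum_lt_sum
  · intro m _
    rcases le_or_gt m t with h | h
    · -- coefficient ≤ 0, and x^m*y^t ≥ y^m*x^t
      have hc : ((m : ℝ) - ρ₁) / (Nat.factorial m : ℝ) ≤ 0 := by
        apply div_nonpos_of_nonpos_of_nonneg
        · have : (m : ℝ) ≤ (t : ℝ) := by exact_mod_cast h
          linarith
        · positivity
      have hpow : y ^ m * x ^ t ≤ x ^ m * y ^ t := by
        have e : t = m + (t - m) := by omega
        rw [e, pow_add, pow_add]
        have : x ^ (t - m) ≤ y ^ (t - m) := pow_le_pow_left₀ hx.le hxy.le _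
        have hxm : (0:ℝ) < x ^ m := pow_pos hx m
        have hym : (0:ℝ) < y ^ m := pow_pos hy m
        nlinarith [mul_nonneg (mul_nonneg hxm.le hym.le) (sub_nonneg.2 this)]
      nlinarith [hpow, hc]
    · -- coefficient > 0, x^m*y^t < y^m*x^t
      have hc : 0 < ((m : ℝ) - ρ₁) / (Nat.factorial m : ℝ) := by
        apply div_pos
        · have : (t : ℝ) + 1 ≤ (m : ℝ) := by exact_mod_cast h
          linarith
        · exact_mod_cast m.factorial_pos
      have hpow : x ^ m * y ^ t < y ^ m * x ^ t := by
        have e : m = t + (m - t) := by omega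
        rw [e, pow_add, pow_add]
        have h1 : x ^ (m - t) < y ^ (m - t) := by
          apply pow_lt_pow_left₀ hxy hx.le
          omega
        have hxt : (0:ℝ) < x ^ t := pow_pos hx t
        have hyt : (0:ℝ) < y ^ t := pow_pos hy t
        nlinarith [mul_pos (mul_pos hxt hyt) (sub_pos.2 h1)]
      nlinarith [hpow, hc]
  · refine ⟨t + 1, Finset.mem_range.2 htC, ?_⟩
    have hc : 0 < (((t:ℕ) + 1 : ℕ) : ℝ) - ρ₁ := by push_cast; linarith
    have hc2 : 0 < ((((t:ℕ)+1:ℕ) : ℝ) - ρ₁) / (Nat.factorial (t+1) : ℝ) := by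
      apply div_pos hc
      exact_mod_cast (t+1).factorial_pos
    have hpow : x ^ (t+1) * y ^ t < y ^ (t+1) * x ^ t := by
      rw [pow_succ, pow_succ]
      have hxt : (0:ℝ) < x ^ t := pow_pos hx t
      have hyt : (0:ℝ) < y ^ t := pow_pos hy t
      nlinarith [mul_pos (mul_pos hxt hyt) (sub_pos.2 hxy)]
    nlinarith [hpow, hc2]



lemma Haux_exists_pos (ρ₁ : ℝ) (hρ₁ : 0 < ρ₁) (D : ℕ) (hρC : ρ₁ < (D : ℝ) + 1) :
    ∃ X : ℝ, ρ₁ < X ∧ 0 < Haux ρ₁ (D + 2) X := by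
  set ε := (((D : ℝ) + 1) - ρ₁) / (Nat.factorial (D + 1) : ℝ) with hεdef
  have hfpos : (0:ℝ) < (Nat.factorial (D+1) : ℝ) := by exact_mod_cast (D+1).factorial_pos
  have hε : 0 < ε := div_pos (by linarith) hfpos
  set X := max (ρ₁ + 1) ((ρ₁ * ((D:ℝ) + 2) + 1) / ε) with hXdef
  have hX1 : (1:ℝ) ≤ X := le_trans (by linarith) (le_max_left _ _)
  have hXρ : ρ₁ < X := lt_of_lt_of_le (by linarith) (le_max_left _ _)
  have hX0 : (0:ℝ) < X := by linarith
  have hεX : ρ₁ * ((D:ℝ) + 2) + 1 ≤ ε * X := by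
    have h := le_max_right (ρ₁ + 1) ((ρ₁ * ((D:ℝ) + 2) + 1) / ε)
    rw [div_le_iff₀ hε] at h
    calc ρ₁ * ((D:ℝ) + 2) + 1 ≤ X * ε := h
      _ = ε * X := by ring
  refine ⟨X, hXρ, ?_⟩
  have hXD : (0:ℝ) < X ^ D := pow_pos hX0 D
  have hsum : ∑ m ∈ Finset.range (D+1), (((m : ℝ) - ρ₁) / (Nat.factorial m : ℝ)) * X ^ m
      ≥ ((D:ℝ) + 1) * (-ρ₁ * X ^ D) := by
    have hterm : ∀ m ∈ Finset.range (D+1),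
        -ρ₁ * X ^ D ≤ (((m : ℝ) - ρ₁) / (Nat.factorial m : ℝ)) * X ^ m := by
      intro m hm
      have hmD : m ≤ D := by
        have := Finset.mem_range.1 hm; omega
      have hF1 : (1:ℝ) ≤ (Nat.factorial m : ℝ) := by exact_mod_cast m.factorial_pos
      have hc : -ρ₁ ≤ ((m : ℝ) - ρ₁) / (Nat.factorial m : ℝ) := by
        rw [le_div_iff₀ (by linarith)]
        have hm0 : (0:ℝ) ≤ (m:ℝ) := Nat.cast_nonneg m
        nlinarith [mul_nonneg hρ₁.le (sub_nonneg.2 hF1)]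
      have hpow : X ^ m ≤ X ^ D := pow_le_pow_right₀ hX1 hmD
      have hXm : (0:ℝ) < X ^ m := pow_pos hX0 m
      calc -ρ₁ * X ^ D ≤ -ρ₁ * X ^ m := by nlinarith
        _ ≤ (((m : ℝ) - ρ₁) / (Nat.factorial m : ℝ)) * X ^ m := by nlinarith
    have h := Finset.card_nsmul_le_sum (Finset.range (D+1)) _ _ hterm
    rw [Finset.card_range] at h
    have : ((D+1 : ℕ) : ℝ) * (-ρ₁ * X ^ D) = (D+1) • (-ρ₁ * X ^ D) := by
      rw [nsmul_eq_mul]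
    push_cast at this
    linarith [h, this ▸ h]
  have htop : (((((D:ℕ)+1 : ℕ)) : ℝ) - ρ₁) / (Nat.factorial (D+1) : ℝ) * X ^ (D+1)
      ≥ (ρ₁ * ((D:ℝ) + 2) + 1) * X ^ D := by
    have e1 : (((((D:ℕ)+1 : ℕ)) : ℝ) - ρ₁) / (Nat.factorial (D+1) : ℝ) = ε := by
      rw [hεdef]; push_cast; ring_nf
    rw [e1, pow_succ]
    calc (ρ₁ * ((D:ℝ) + 2) + 1) * X ^ D ≤ (ε * X) * X ^ D := by nlinarith
      _ = ε * (X ^ D * X) := by ring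
  unfold Haux
  rw [Finset.sum_range_succ]
  have hfinal : ((D:ℝ) + 1) * (-ρ₁ * X ^ D) + (ρ₁ * ((D:ℝ) + 2) + 1) * X ^ D
      = (ρ₁ + 1) * X ^ D := by ring
  nlinarith [hsum, htop]

theorem stmt_3 (C : ℕ) (hC : 2 ≤ C) (ρ₁ : ℝ) (hρ₁ : 0 < ρ₁) (hρ₁C : ρ₁ < (C : ℝ) - 1)
    (Φ : ℝ → ℝ)
    (hΦ : ∀ z : ℝ, Φ z = (1 / z) * (ρ₁ + (C : ℝ) * z) ^ C / (Nat.factorial C : ℝ)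
        - ∑ m ∈ Finset.range C, (ρ₁ + (C : ℝ) * z) ^ m / (Nat.factorial m : ℝ)) :
    ∃! z : ℝ, 0 < z ∧ Φ z = 0 := by
  have hCpos : (0:ℝ) < (C:ℝ) := by
    have : (0:ℕ) < C := by omega
    exact_mod_cast this
  -- the floor of ρ₁
  set t := Nat.floor ρ₁ with ht
  have htρ : (t:ℝ) ≤ ρ₁ := Nat.floor_le hρ₁.le
  have hρt : ρ₁ < (t:ℝ) + 1 := Nat.lt_floor_add_one ρ₁
  have htC : t + 1 < C := by
    have h1 : (t:ℝ) + 1 < (C:ℝ) := by linarith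
    exact_mod_cast h1
  -- key relation between Φ and Haux
  have heq : ∀ z : ℝ, z ≠ 0 → ((C:ℝ) * z) * Φ z = - Haux ρ₁ C (ρ₁ + (C:ℝ) * z) := by
    intro z hz
    have h := Haux_id ρ₁ (ρ₁ + (C:ℝ)*z) C
    rw [show ρ₁ + (C:ℝ)*z - ρ₁ = (C:ℝ)*z by ring] at h
    rw [hΦ z, ← h]
    field_simp
    ring
  -- continuity
  have hcont : Continuous (Haux ρ₁ C) := by
    unfold Haux
    exact continuous_finset_sum _ fun m _ => by fun_prop
  -- Haux ρ₁ < 0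
  have hHρ : Haux ρ₁ C ρ₁ < 0 := by
    have h := Haux_id ρ₁ ρ₁ C
    rw [sub_self, zero_mul, zero_sub] at h
    rw [← h]
    have hCfac : (0:ℝ) < (Nat.factorial C : ℝ) := by exact_mod_cast C.factorial_pos
    have : 0 < (C:ℝ) * ρ₁ ^ C / (Nat.factorial C : ℝ) := by positivity
    linarith
  -- a point where Haux > 0
  obtain ⟨D, rfl⟩ : ∃ D, C = D + 2 := ⟨C - 2, by omega⟩
  obtain ⟨X, hXρ, hXpos⟩ := Haux_exists_pos ρ₁ hρ₁ D (by push_cast at hρ₁C ⊢; linarith)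
  -- IVT
  obtain ⟨x₀, hx₀mem, hx₀⟩ := intermediate_value_Icc hXρ.le hcont.continuousOn
    (show (0:ℝ) ∈ Icc (Haux ρ₁ (D+2) ρ₁) (Haux ρ₁ (D+2) X) from ⟨hHρ.le, hXpos.le⟩)
  have hx₀ρ : ρ₁ < x₀ := by
    rcases eq_or_lt_of_le hx₀mem.1 with h | h
    · exfalso; rw [← h] at hx₀; linarith
    · exact h
  have hx₀pos : 0 < x₀ := lt_trans hρ₁ hx₀ρ
  -- uniqueness of positive roots of Haux
  have huniq : ∀ a b : ℝ, 0 < a → 0 < b → Haux ρ₁ (D+2) a = 0 → Haux ρ₁ (D+2) b = 0 → a = b := by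
    intro a b ha hb h1 h2
    rcases lt_trichotomy a b with h | h | h
    · have := Haux_lt ρ₁ (D+2) t htρ hρt htC ha h
      rw [h1, h2, zero_mul, zero_mul] at this
      exact absurd this (lt_irrefl 0)
    · exact h
    · have := Haux_lt ρ₁ (D+2) t htρ hρt htC hb h
      rw [h1, h2, zero_mul, zero_mul] at this
      exact absurd this (lt_irrefl 0)
  -- the root of Φ
  set N : ℝ := ((D + 2 : ℕ) : ℝ) with hN
  have hNpos : 0 < N := hCpos
  set z₀ := (x₀ - ρ₁) / N with hz₀
  have hz₀pos : 0 < z₀ := div_pos (by linarith) hNpos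
  have harg : ρ₁ + N * z₀ = x₀ := by
    rw [hz₀]; field_simp; ring
  have hΦz₀ : Φ z₀ = 0 := by
    have h := heq z₀ (ne_of_gt hz₀pos)
    rw [harg, hx₀, neg_zero] at h
    have hNz : N * z₀ ≠ 0 := by positivity
    exact (mul_eq_zero.1 h).resolve_left hNz
  refine ⟨z₀, ⟨hz₀pos, hΦz₀⟩, ?_⟩
  rintro y ⟨hy, hΦy⟩
  have h := heq y (ne_of_gt hy)
  rw [hΦy, mul_zero] at h
  have hroot : Haux ρ₁ (D+2) (ρ₁ + N * y) = 0 := by linarith [h]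
  have hpos : 0 < ρ₁ + N * y := by positivity
  have := huniq (ρ₁ + N * y) x₀ hpos hx₀pos hroot hx₀
  rw [← harg] at this
  have : N * y = N * z₀ := by linarith
  exact mul_left_cancel₀ (ne_of_gt hNpos) this
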